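/- Fix a real x ≥ 0 and define, for each n ∈ ℕ, N_n(x) = Σ_{k=0}^n c_{n,k}(k+1)x^k p(k,0) and D_n(x) = 1 + Σ_{k=0}^n c_{n,k}(−1)^{k+1} x^k [(k+1−2x²)·p(k,x) + x·p'(k,x)], and the rational approximation g_n(x) = N_n(x)/D_n(x). If there is a constant δ > 0 such that |D_n(x)| ≥ δ for all sufficiently large n, then lim_{n→∞} g_n(x) = exp(−x²). -/

import Mathlib

open Real Filter

/-- The Hermite-type polynomials `p k x`. -/
noncomputable def p : ℕ → ℝ → ℝ
  | 0 => fun _ => 1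
  | (k + 1) => fun x => deriv (p k) x - 2 * x * p k x

/-- Spline coefficients `c_{n,k}`. -/
noncomputable def c (n k : ℕ) : ℝ :=
  ((Nat.factorial n : ℝ) / ((Nat.factorial (n - k) : ℝ) * (Nat.factorial (k + 1) : ℝ))) *
    ((Nat.factorial (2 * n + 1 - k) : ℝ) / (2 * (Nat.factorial (2 * n + 1) : ℝ)))

/-- Numerator of the rational approximation to `exp(-x²)`. -/
noncomputable def N (n : ℕ) (x : ℝ) : ℝ :=
  ∑ k ∈ Finset.range (n + 1), c n k * ((k : ℝ) + 1) * x ^ k * p k 0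

/-- Denominator of the rational approximation to `exp(-x²)`. -/
noncomputable def D (n : ℕ) (x : ℝ) : ℝ :=
  1 + ∑ k ∈ Finset.range (n + 1), c n k * (-1 : ℝ) ^ (k + 1) * x ^ k *
    (((k : ℝ) + 1 - 2 * x ^ 2) * p k x + x * deriv (p k) x)

namespace RationalApproxAux

open Polynomial

/-! ### The polynomials `Q k` underlying `p k` -/

noncomputable def Q : ℕ → Polynomial ℝ
  | 0 => 1
  | (k + 1) => (Q k).derivative - C 2 * X * Q k

lemma p_eq (k : ℕ) : p k = fun x => (Q k).eval x := by
  induction k with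
  | zero => funext x; simp [p, Q]
  | succ k ih =>
    funext x
    show deriv (p k) x - 2 * x * p k x = _
    rw [ih]
    simp [Q, Polynomial.deriv]

lemma deriv_p (k : ℕ) (x : ℝ) : deriv (p k) x = (Q k).derivative.eval x := by
  rw [p_eq]; exact Polynomial.deriv _

/-! ### The complex Gaussian and its derivatives -/

noncomputable def fC : ℂ → ℂ := fun z => Complex.exp (-z ^ 2)

lemma fC_diff : Differentiable ℂ fC := by
  apply Complex.differentiable_exp.comp
  exact (differentiable_pow 2).neg

lemma hasDerivAt_fC (z : ℂ) : HasDerivAt fC (-2 * z * fC z) z := by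
  have h1 : HasDerivAt (fun z : ℂ => -z ^ 2) (-(2 * z)) z := by
    exact (hasDerivAt_pow 2 z).fun_neg |>.congr_deriv (by simp)
  exact h1.cexp.congr_deriv (by simp only [fC]; ring)

lemma iteratedDeriv_fC (k : ℕ) :
    iteratedDeriv k fC = fun z => aeval z (Q k) * fC z := by
  induction k with
  | zero => funext z; simp [Q, iteratedDeriv_zero]
  | succ k ih =>
    funext z
    rw [iteratedDeriv_succ, ih]
    have h1 : HasDerivAt (fun z : ℂ => aeval z (Q k) * fC z)
        (aeval z (derivative (Q k)) * fC z + aeval z (Q k) * (-2 * z * fC z)) z :=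
      ((Q k).hasDerivAt_aeval z).mul (hasDerivAt_fC z)
    rw [h1.deriv]
    simp [Q, map_sub, map_mul]
    ring

/-- Global Taylor expansion of the Gaussian. -/
lemma taylor_gauss (a t : ℝ) :
    HasSum (fun k : ℕ => (Q k).eval a * t ^ k / (k.factorial : ℝ) * Real.exp (-a ^ 2))
      (Real.exp (-(a + t) ^ 2)) := by
  have H := Complex.hasSum_taylorSeries_of_entire fC_diff (a : ℂ) ((a : ℂ) + t)
  rw [← Complex.hasSum_ofReal]
  convert H using 2 with k
  · rfl
  · rw [iteratedDeriv_fC]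
    have : (aeval (a : ℂ)) (Q k) = Complex.ofReal ((Q k).eval a) :=
      Polynomial.aeval_algebraMap_apply_eq_algebraMap_eval a (Q k)
    push_cast
    rw [this]
    simp [fC]
    ring
  · simp [fC]

/-! ### Coefficient asymptotics -/

noncomputable def γ (k : ℕ) : ℝ := (2 : ℝ)⁻¹ ^ k / (2 * (Nat.factorial (k + 1) : ℝ))

lemma γ_nonneg (k : ℕ) : 0 ≤ γ k := by unfold γ; positivity

lemma cast_descFactorial {n k : ℕ} (h : k ≤ n) :
    (n.descFactorial k : ℝ) = ∏ i ∈ Finset.range k, ((n : ℝ) - i) := by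
  rw [Nat.descFactorial_eq_prod_range, Nat.cast_prod]
  refine Finset.prod_congr rfl fun i hi => ?_
  rw [Nat.cast_sub (le_trans (Nat.le_of_lt_succ (Nat.lt_succ_of_lt (Finset.mem_range.mp hi))) h)]

lemma c_eq {n k : ℕ} (h : k ≤ n) :
    c n k = (∏ i ∈ Finset.range k, (((n : ℝ) - i) / ((2 * n : ℝ) + 1 - i))) /
      (2 * (Nat.factorial (k + 1) : ℝ)) := by
  have h2 : k ≤ 2 * n + 1 := by omega
  have e1 : ((n - k).factorial : ℝ) * (n.descFactorial k : ℝ) = (n.factorial : ℝ) := by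
    exact_mod_cast congrArg (Nat.cast (R := ℝ)) (Nat.factorial_mul_descFactorial h)
  have e2 : ((2 * n + 1 - k).factorial : ℝ) * ((2 * n + 1).descFactorial k : ℝ)
      = ((2 * n + 1).factorial : ℝ) := by
    exact_mod_cast congrArg (Nat.cast (R := ℝ)) (Nat.factorial_mul_descFactorial h2)
  have hd : ∏ i ∈ Finset.range k, (((n : ℝ) - i) / ((2 * n : ℝ) + 1 - i))
      = (n.descFactorial k : ℝ) / ((2 * n + 1).descFactorial k : ℝ) := by
    rw [cast_descFactorial h, cast_descFactorial h2, Finset.prod_div_distrib]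
    congr 1
    refine Finset.prod_congr rfl fun i _ => ?_
    push_cast
    ring_nf
  rw [hd, c]
  have p1 : (0 : ℝ) < ((n - k).factorial : ℝ) := by exact_mod_cast Nat.factorial_pos _
  have p2 : (0 : ℝ) < ((2 * n + 1 - k).factorial : ℝ) := by exact_mod_cast Nat.factorial_pos _
  have p3 : (0 : ℝ) < ((2 * n + 1).factorial : ℝ) := by exact_mod_cast Nat.factorial_pos _
  have p4 : (0 : ℝ) < ((k + 1).factorial : ℝ) := by exact_mod_cast Nat.factorial_pos _
  have p5 : (0 : ℝ) < ((2 * n + 1).descFactorial k : ℝ) := by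
    nlinarith [e2, p2, p3]
  rw [← e1, ← e2]
  field_simp

lemma c_nonneg (n k : ℕ) : 0 ≤ c n k := by
  unfold c
  positivity

lemma ratio_nonneg {n k i : ℕ} (h : k ≤ n) (hi : i < k) :
    0 ≤ ((n : ℝ) - i) / ((2 * n : ℝ) + 1 - i) := by
  have h1 : (i : ℝ) ≤ n := by exact_mod_cast le_of_lt (lt_of_lt_of_le hi h)
  have h2 : (i : ℝ) < 2 * n + 1 := by nlinarith
  apply div_nonneg <;> linarith

lemma ratio_le {n k i : ℕ} (h : k ≤ n) (hi : i < k) :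
    ((n : ℝ) - i) / ((2 * n : ℝ) + 1 - i) ≤ 2⁻¹ := by
  have h1 : (i : ℝ) ≤ n := by exact_mod_cast le_of_lt (lt_of_lt_of_le hi h)
  have h2 : (0 : ℝ) < 2 * n + 1 - i := by nlinarith
  rw [div_le_iff₀ h2]
  nlinarith

lemma c_le {n k : ℕ} (h : k ≤ n) : c n k ≤ γ k := by
  rw [c_eq h, γ]
  gcongr
  calc ∏ i ∈ Finset.range k, (((n : ℝ) - i) / ((2 * n : ℝ) + 1 - i))
      ≤ ∏ _i ∈ Finset.range k, (2 : ℝ)⁻¹ := by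
        apply Finset.prod_le_prod
        · exact fun i hi => ratio_nonneg h (Finset.mem_range.mp hi)
        · exact fun i hi => ratio_le h (Finset.mem_range.mp hi)
    _ = (2 : ℝ)⁻¹ ^ k := by simp

lemma c_tendsto (k : ℕ) : Tendsto (fun n => c n k) atTop (nhds (γ k)) := by
  have key : Tendsto (fun n : ℕ => ∏ i ∈ Finset.range k, (((n : ℝ) - i) / ((2 * n : ℝ) + 1 - i)))
      atTop (nhds ((2 : ℝ)⁻¹ ^ k)) := by
    have : ((2 : ℝ)⁻¹ ^ k) = ∏ i ∈ Finset.range k, (2 : ℝ)⁻¹ := by simp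
    rw [this]
    apply tendsto_finset_prod
    intro i _
    have hg : ContinuousAt (fun t : ℝ => (1 - i * t) / (2 + (1 - i) * t)) 0 := by
      apply ContinuousAt.div
      · fun_prop
      · fun_prop
      · norm_num
    have h0 := hg.tendsto.comp tendsto_one_div_atTop_nhds_zero_nat
    have hval : (1 - (i : ℝ) * 0) / (2 + (1 - (i : ℝ)) * 0) = 2⁻¹ := by norm_num
    rw [hval] at h0
    apply h0.congr'
    filter_upwards [eventually_ge_atTop (i + 1)] with n hn
    have hn0 : (0 : ℝ) < n := by exact_mod_cast Nat.lt_of_lt_of_le (Nat.succ_pos i) hn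
    have hd : (0 : ℝ) < 2 * n + 1 - i := by
      have : (i : ℝ) ≤ n := by exact_mod_cast Nat.le_of_succ_le hn
      nlinarith
    have hne : (2 + (1 - (i : ℝ)) * (1 / (n : ℝ))) ≠ 0 := by
      have : (2 + (1 - (i : ℝ)) * (1 / (n : ℝ))) = (2 * n + 1 - i) / n := by
        field_simp
        ring
      rw [this]
      positivity
    show (1 - (i : ℝ) * (1 / n)) / (2 + (1 - (i : ℝ)) * (1 / n)) = _
    rw [div_eq_div_iff hne hd.ne']
    have hnne : (n : ℝ) ≠ 0 := hn0.ne'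
    field_simp
    ring
  have := (key.div_const (2 * ((k + 1).factorial : ℝ)))
  rw [show γ k = (2 : ℝ)⁻¹ ^ k / (2 * ((k + 1).factorial : ℝ)) from rfl]
  apply this.congr'
  filter_upwards [eventually_ge_atTop k] with n hn
  rw [c_eq hn]

/-! ### Limits of weighted partial sums -/

lemma sum_tendsto {A : ℕ → ℝ} {L : ℝ} (hL : HasSum (fun k => γ k * A k) L) :
    Tendsto (fun n => ∑ k ∈ Finset.range (n + 1), c n k * A k) atTop (nhds L) := by
  set F : ℕ → ℕ → ℝ := fun n k => if k ≤ n then c n k * A k else 0 with hF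
  have key : Tendsto (fun n => ∑' k, F n k) atTop (nhds (∑' k, γ k * A k)) := by
    apply tendsto_tsum_of_dominated_convergence (bound := fun k => γ k * |A k|)
    · have : Summable (fun k => |γ k * A k|) :=
        (summable_abs_iff).mpr hL.summable
      apply this.congr
      intro k
      rw [abs_mul, abs_of_nonneg (γ_nonneg k)]
    · intro k
      apply ((c_tendsto k).mul_const (A k)).congr'
      filter_upwards [eventually_ge_atTop k] with n hn
      simp [hF, hn]
    · filter_upwards with n
      intro k
      by_cases hk : k ≤ n
      · simp only [hF, hk, if_true]
        rw [Real.norm_eq_abs, abs_mul, abs_of_nonneg (c_nonneg n k)]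
        exact mul_le_mul_of_nonneg_right (c_le hk) (abs_nonneg _)
      · simp only [hF, hk, if_false, norm_zero]
        exact mul_nonneg (RationalApproxAux.γ_nonneg k) (abs_nonneg _)
  rw [← hL.tsum_eq]
  apply key.congr
  intro n
  rw [tsum_eq_sum (s := Finset.range (n + 1)) (by
    intro k hk
    simp only [hF]
    rw [if_neg (by
      intro hle
      exact hk (Finset.mem_range.mpr (Nat.lt_succ_of_le hle)))])]
  · apply Finset.sum_congr rfl
    intro k hk
    simp only [hF]
    rw [if_pos (Nat.lt_succ_iff.mp (Finset.mem_range.mp hk))]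

end RationalApproxAux

/-- If the denominators are eventually bounded away from zero, the rational
approximations `Nₙ(x)/Dₙ(x)` converge to `exp(−x²)`. -/
theorem rational_approx_tendsto_gaussian (x : ℝ) (hx : 0 ≤ x)
    (h : ∃ δ > 0, ∀ᶠ n : ℕ in atTop, δ ≤ |D n x|) :
    Tendsto (fun n : ℕ => N n x / D n x) atTop (nhds (Real.exp (-x ^ 2))) := by
  open RationalApproxAux in
  classical
  -- the numerator coefficients and their limit series
  set A : ℕ → ℝ := fun k => ((k : ℝ) + 1) * x ^ k * (Q k).eval 0 with hAdef
  set B : ℕ → ℝ := fun k => (-1 : ℝ) ^ (k + 1) * x ^ k *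
      (((k : ℝ) + 1 - 2 * x ^ 2) * (Q k).eval x + x * (Q k).derivative.eval x) with hBdef
  -- Taylor series of the Gaussian at 0 evaluated at x/2
  have hw : HasSum (fun k : ℕ => (Q k).eval 0 * (x / 2) ^ k / (k.factorial : ℝ))
      (Real.exp (-(x / 2) ^ 2)) := by
    have H := taylor_gauss 0 (x / 2)
    simpa using H
  -- Taylor series of the Gaussian at x evaluated at x/2
  set v : ℕ → ℝ := fun k => (-(x / 2)) ^ k * (Q k).eval x / (k.factorial : ℝ) with hvdef
  have hv : HasSum v (Real.exp ((3 / 4) * x ^ 2)) := by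
    have hv0 := taylor_gauss x (-(x / 2))
    have hxx : x + -(x / 2) = x / 2 := by ring
    rw [hxx] at hv0
    have h1 := hv0.mul_right (Real.exp (x ^ 2))
    have h2 : Real.exp (-(x / 2) ^ 2) * Real.exp (x ^ 2) = Real.exp ((3 / 4) * x ^ 2) := by
      rw [← Real.exp_add]; ring_nf
    rw [h2] at h1
    have h3 : (fun k : ℕ => (Q k).eval x * (-(x / 2)) ^ k / (k.factorial : ℝ) *
        Real.exp (-x ^ 2) * Real.exp (x ^ 2)) = v := by
      funext k
      rw [mul_assoc, ← Real.exp_add, neg_add_cancel, Real.exp_zero, mul_one, hvdef]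
      ring
    rwa [h3] at h1
  have hv0val : v 0 = 1 := by simp [hvdef, Q]
  have hv1 : HasSum (fun k => v (k + 1)) (Real.exp ((3 / 4) * x ^ 2) - 1) := by
    refine (hasSum_nat_add_iff (f := v) 1).mpr ?_
    rw [Finset.sum_range_one, hv0val]
    convert hv using 1
    · rfl
    ring
  -- limit of the numerator coefficient series
  have hNA : HasSum (fun k => γ k * A k) (Real.exp (-(x / 2) ^ 2) / 2) := by
    have h1 := hw.div_const 2
    have h2 : (fun k : ℕ => (Q k).eval 0 * (x / 2) ^ k / (k.factorial : ℝ) / 2)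
        = fun k => γ k * A k := by
      funext k
      have hfact : ((k + 1).factorial : ℝ) = ((k : ℝ) + 1) * (k.factorial : ℝ) := by
        rw [Nat.factorial_succ]; push_cast; ring
      have hf0 : (k.factorial : ℝ) ≠ 0 := by exact_mod_cast (Nat.factorial_pos k).ne'
      have hk1 : ((k : ℝ) + 1) ≠ 0 := by positivity
      rw [γ, hfact, hAdef]
      have hm : ((x / 2) : ℝ) ^ k = x ^ k * (2 : ℝ)⁻¹ ^ k := by
        rw [show ((x / 2) : ℝ) = x * 2⁻¹ by ring, mul_pow]
      rw [hm]
      field_simp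
    rwa [h2] at h1
  -- limit of the denominator coefficient series
  have hkey : ∀ k, γ k * B k = v (k + 1) - v k / 2 := by
    intro k
    have hQ : (Q (k + 1)).eval x = (Q k).derivative.eval x - 2 * x * (Q k).eval x := by
      simp [Q]
    have hfact : ((k + 1).factorial : ℝ) = ((k : ℝ) + 1) * (k.factorial : ℝ) := by
      rw [Nat.factorial_succ]; push_cast; ring
    have hf0 : (k.factorial : ℝ) ≠ 0 := by exact_mod_cast (Nat.factorial_pos k).ne'
    have hk1 : ((k : ℝ) + 1) ≠ 0 := by positivity
    have hm : ((-(x / 2)) : ℝ) ^ k = (-1 : ℝ) ^ k * x ^ k * (2 : ℝ)⁻¹ ^ k := by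
      rw [show ((-(x / 2)) : ℝ) = (-1) * x * 2⁻¹ by ring, mul_pow, mul_pow]
    simp only [hvdef, hBdef]
    rw [hQ, hfact, γ, hfact, pow_succ (-(x / 2) : ℝ) k, hm, pow_succ (-1 : ℝ) k]
    field_simp
    ring
  have hDB : HasSum (fun k => γ k * B k) (Real.exp ((3 / 4) * x ^ 2) / 2 - 1) := by
    have h1 := hv1.sub (hv.div_const 2)
    have h2 : (fun k => v (k + 1) - v k / 2) = fun k => γ k * B k := by
      funext k; rw [hkey k]
    rw [h2] at h1
    convert h1 using 1
    · rfl
    ring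
  -- convergence of numerator and denominator
  have hNlim : Tendsto (fun n : ℕ => N n x) atTop (nhds (Real.exp (-(x / 2) ^ 2) / 2)) := by
    apply (sum_tendsto hNA).congr
    intro n
    rw [N]
    apply Finset.sum_congr rfl
    intro k _
    simp only [p_eq, hAdef]
    ring
  have hDlim : Tendsto (fun n : ℕ => D n x) atTop (nhds (Real.exp ((3 / 4) * x ^ 2) / 2)) := by
    have h1 := (tendsto_const_nhds : Tendsto (fun _ : ℕ => (1 : ℝ)) atTop (nhds 1)).add
      (sum_tendsto hDB)
    have h2 : (1 : ℝ) + (Real.exp ((3 / 4) * x ^ 2) / 2 - 1) = Real.exp ((3 / 4) * x ^ 2) / 2 := by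
      ring
    rw [h2] at h1
    apply h1.congr
    intro n
    rw [D]
    congr 1
    apply Finset.sum_congr rfl
    intro k _
    simp only [p_eq, deriv_p, Polynomial.deriv, hBdef]
    ring
  -- assemble
  have hDpos : (0 : ℝ) < Real.exp ((3 / 4) * x ^ 2) / 2 := by positivity
  have hfin := hNlim.div hDlim hDpos.ne'
  have hval : Real.exp (-(x / 2) ^ 2) / 2 / (Real.exp ((3 / 4) * x ^ 2) / 2)
      = Real.exp (-x ^ 2) := by
    rw [div_div_div_comm, div_self (two_ne_zero), div_one, ← Real.exp_sub]
    congr 1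
    ring
  rwa [hval] at hfin
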